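/- For every symmetric 3-tensor T on ℝ^p it holds E[T(γ)²] = 6‖T‖_Fr² + 9‖M‖², where γ is a standard Gaussian vector and ‖·‖ is the Euclidean norm on ℝ^p. -/

import Mathlib

open MeasureTheory ProbabilityTheory Finset

open Real
open scoped NNReal ENNReal

noncomputable def Igauss (n : ℕ) : ℝ := ∫ x : ℝ, x ^ n * Real.exp (-(2⁻¹:ℝ) * x ^ 2)

lemma cont_pow_gauss (n : ℕ) : Continuous (fun x : ℝ => x ^ n * Real.exp (-(2⁻¹:ℝ) * x ^ 2)) :=
  (continuous_pow n).mul (Real.continuous_exp.comp (continuous_const.mul (continuous_pow 2)))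

lemma integrable_pow_mul_gauss (n : ℕ) :
    Integrable (fun x : ℝ => x ^ n * Real.exp (-(2⁻¹:ℝ) * x ^ 2)) := by
  have hmeas : AEStronglyMeasurable (fun x : ℝ => x ^ n * Real.exp (-(2⁻¹:ℝ) * x ^ 2)) volume :=
    (cont_pow_gauss n).aestronglyMeasurable
  have hg : Integrable (fun x : ℝ =>
      ((Nat.factorial n : ℝ) * Real.exp 1) * Real.exp (-(4⁻¹:ℝ) * x ^ 2)) :=
    (integrable_exp_neg_mul_sq (by norm_num : (0:ℝ) < 4⁻¹)).const_mul _
  refine hg.mono' hmeas ?_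
  filter_upwards with x
  have h1 : |x| ^ n / (Nat.factorial n : ℝ) ≤ Real.exp |x| :=
    Real.pow_div_factorial_le_exp _ (abs_nonneg x) n
  have hfact : (0:ℝ) < (Nat.factorial n : ℝ) := by positivity
  have h2 : |x| ^ n ≤ (Nat.factorial n : ℝ) * Real.exp |x| := by
    rw [div_le_iff₀ hfact] at h1; linarith [h1]
  have h3 : |x| - 2⁻¹ * x ^ 2 ≤ 1 - 4⁻¹ * x ^ 2 := by
    nlinarith [abs_nonneg x, sq_abs x, sq_nonneg (|x| - 2)]
  calc ‖x ^ n * Real.exp (-(2⁻¹:ℝ) * x ^ 2)‖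
      = |x| ^ n * Real.exp (-(2⁻¹:ℝ) * x ^ 2) := by
        rw [norm_mul, norm_pow, Real.norm_eq_abs, Real.norm_eq_abs,
          abs_of_pos (Real.exp_pos _)]
    _ ≤ ((Nat.factorial n : ℝ) * Real.exp |x|) * Real.exp (-(2⁻¹:ℝ) * x ^ 2) :=
        mul_le_mul_of_nonneg_right h2 (Real.exp_pos _).le
    _ = (Nat.factorial n : ℝ) * Real.exp (|x| + -(2⁻¹:ℝ) * x ^ 2) := by
        rw [mul_assoc, ← Real.exp_add]
    _ ≤ (Nat.factorial n : ℝ) * Real.exp (1 + -(4⁻¹:ℝ) * x ^ 2) := by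
        refine mul_le_mul_of_nonneg_left (Real.exp_le_exp.2 (by linarith)) hfact.le
    _ = ((Nat.factorial n : ℝ) * Real.exp 1) * Real.exp (-(4⁻¹:ℝ) * x ^ 2) := by
        rw [mul_assoc, ← Real.exp_add]

lemma Igauss_rec (n : ℕ) : Igauss (n + 2) = (n + 1) * Igauss n := by
  have hderiv : ∀ x : ℝ, HasDerivAt (fun x : ℝ => x ^ (n+1) * Real.exp (-(2⁻¹:ℝ) * x ^ 2))
      (((n:ℝ)+1) * x ^ n * Real.exp (-(2⁻¹:ℝ) * x ^ 2)
        - x ^ (n+2) * Real.exp (-(2⁻¹:ℝ) * x ^ 2)) x := by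
    intro x
    have h1 : HasDerivAt (fun x : ℝ => x ^ (n+1)) (((n:ℝ)+1) * x ^ n) x := by
      simpa using hasDerivAt_pow (n+1) x
    have h3 : HasDerivAt (fun x : ℝ => -(2⁻¹:ℝ) * x ^ 2) (-(2⁻¹:ℝ) * (2 * x)) x := by
      simpa using ((hasDerivAt_pow 2 x).const_mul (-(2⁻¹:ℝ)))
    have := h1.mul h3.exp
    exact this.congr_deriv (by ring)
  have hint : Integrable (fun x : ℝ => ((n:ℝ)+1) * x ^ n * Real.exp (-(2⁻¹:ℝ) * x ^ 2)
      - x ^ (n+2) * Real.exp (-(2⁻¹:ℝ) * x ^ 2)) := by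
    simpa [mul_assoc, Pi.sub_def] using
      ((integrable_pow_mul_gauss n).const_mul ((n:ℝ)+1)).sub (integrable_pow_mul_gauss (n+2))
  have hzero := integral_eq_zero_of_hasDerivAt_of_integrable hderiv hint
    (integrable_pow_mul_gauss (n+1))
  rw [integral_sub (by simpa [mul_assoc] using (integrable_pow_mul_gauss n).const_mul ((n:ℝ)+1))
    (integrable_pow_mul_gauss (n+2))] at hzero
  have : ∫ x : ℝ, ((n:ℝ)+1) * x ^ n * Real.exp (-(2⁻¹:ℝ) * x ^ 2)
      = ((n:ℝ)+1) * Igauss n := by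
    rw [Igauss, ← integral_const_mul]
    congr 1; ext x; ring
  rw [this] at hzero
  have : Igauss (n+2) = ∫ x : ℝ, x ^ (n+2) * Real.exp (-(2⁻¹:ℝ) * x ^ 2) := rfl
  linarith [hzero]

lemma Igauss_one : Igauss 1 = 0 := by
  have hderiv : ∀ x : ℝ, HasDerivAt (fun x : ℝ => -Real.exp (-(2⁻¹:ℝ) * x ^ 2))
      (x ^ 1 * Real.exp (-(2⁻¹:ℝ) * x ^ 2)) x := by
    intro x
    have h3 : HasDerivAt (fun x : ℝ => -(2⁻¹:ℝ) * x ^ 2) (-(2⁻¹:ℝ) * (2 * x)) x := by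
      simpa using ((hasDerivAt_pow 2 x).const_mul (-(2⁻¹:ℝ)))
    have := h3.exp.neg
    exact this.congr_deriv (by ring)
  have := integral_eq_zero_of_hasDerivAt_of_integrable hderiv (integrable_pow_mul_gauss 1)
    ((integrable_pow_mul_gauss 0).neg.congr (by filter_upwards with x; simp))
  simpa [Igauss] using this

lemma Igauss_zero : Igauss 0 = Real.sqrt (2 * π) := by
  have := integral_gaussian (2⁻¹:ℝ)
  simp only [Igauss, pow_zero, one_mul]
  rw [this, show (π / 2⁻¹) = 2 * π by ring]

def momeN : ℕ → ℕ
  | 0 => 1 | 2 => 1 | 4 => 3 | 6 => 15 | _ => 0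

lemma gaussianPDFReal_std (x : ℝ) :
    gaussianPDFReal 0 1 x = (Real.sqrt (2*π))⁻¹ * Real.exp (-(2⁻¹:ℝ) * x ^ 2) := by
  rw [gaussianPDFReal]
  rw [show (2*π*((1:ℝ≥0):ℝ)) = 2*π by push_cast; ring,
    show -(x-0)^2/(2*((1:ℝ≥0):ℝ)) = -(2⁻¹:ℝ)*x^2 by push_cast; ring]

lemma gaussianReal_std :
    gaussianReal 0 1
      = volume.withDensity (fun x => ((((Real.sqrt (2*π))⁻¹
          * Real.exp (-(2⁻¹:ℝ) * x ^ 2)).toNNReal : ℝ≥0) : ℝ≥0∞)) := by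
  rw [gaussianReal_of_var_ne_zero _ one_ne_zero]
  congr 1
  ext x
  rw [gaussianPDF, gaussianPDFReal_std]
  rfl

lemma meas_pdf_std : Measurable (fun x : ℝ =>
    (((Real.sqrt (2*π))⁻¹ * Real.exp (-(2⁻¹:ℝ) * x ^ 2)).toNNReal : ℝ≥0)) := by
  exact (continuous_const.mul
    (Real.continuous_exp.comp (continuous_const.mul (continuous_pow 2)))).measurable.real_toNNReal

lemma integral_gaussianReal_std (g : ℝ → ℝ) :
    ∫ x, g x ∂(gaussianReal 0 1)
      = (Real.sqrt (2*π))⁻¹ * ∫ x : ℝ, g x * Real.exp (-(2⁻¹:ℝ) * x ^ 2) := by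
  rw [gaussianReal_std, integral_withDensity_eq_integral_smul meas_pdf_std, ← integral_const_mul]
  congr 1
  ext x
  rw [NNReal.smul_def, Real.coe_toNNReal _ (by positivity), smul_eq_mul]
  ring

lemma integrable_pow_gaussianReal (n : ℕ) :
    Integrable (fun x : ℝ => x ^ n) (gaussianReal 0 1) := by
  rw [gaussianReal_std, integrable_withDensity_iff_integrable_smul meas_pdf_std]
  refine ((integrable_pow_mul_gauss n).const_mul ((Real.sqrt (2*π))⁻¹)).congr ?_
  filter_upwards with x
  rw [NNReal.smul_def, Real.coe_toNNReal _ (by positivity), smul_eq_mul]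
  ring

lemma integral_pow_gaussianReal {n : ℕ} (hn : n ≤ 6) :
    ∫ x, x ^ n ∂(gaussianReal 0 1) = (momeN n : ℝ) := by
  have hI : ∫ x, x ^ n ∂(gaussianReal 0 1) = (Real.sqrt (2*π))⁻¹ * Igauss n :=
    integral_gaussianReal_std _
  have hs : (Real.sqrt (2*π))⁻¹ * Real.sqrt (2*π) = 1 := by
    rw [inv_mul_cancel₀]
    rw [Real.sqrt_ne_zero' ]
    positivity
  have h2 : Igauss 2 = 1 * Igauss 0 := by
    have := Igauss_rec 0; norm_num at this; simpa using this
  have h3 : Igauss 3 = 2 * Igauss 1 := by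
    have := Igauss_rec 1; norm_num at this; exact this
  have h4 : Igauss 4 = 3 * Igauss 2 := by
    have := Igauss_rec 2; norm_num at this; exact this
  have h5 : Igauss 5 = 4 * Igauss 3 := by
    have := Igauss_rec 3; norm_num at this; exact this
  have h6 : Igauss 6 = 5 * Igauss 4 := by
    have := Igauss_rec 4; norm_num at this; exact this
  interval_cases n <;>
    simp_all [momeN, Igauss_zero, Igauss_one] <;> nlinarith [hs, Real.sq_sqrt (by positivity : (0:ℝ) ≤ 2*π)]

set_option linter.unusedSectionVars false
variable {α : Type*} [DecidableEq α] [Fintype α] {n : ℕ}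

/-- canonical representative map -/
def canon (v : Fin (n+1) → α) (s : Fin (n+1)) : Fin (n+1) :=
  (univ.filter fun t => v t = v s).min' ⟨s, by simp⟩

lemma canon_apply (v : Fin (n+1) → α) (s : Fin (n+1)) : v (canon v s) = v s := by
  have h := Finset.min'_mem (univ.filter fun t => v t = v s) ⟨s, by simp⟩
  simpa [canon] using (Finset.mem_filter.1 h).2

lemma canon_le (v : Fin (n+1) → α) (s : Fin (n+1)) : canon v s ≤ s :=
  Finset.min'_le _ s (by simp)

lemma canon_eq_of (v : Fin (n+1) → α) {s t : Fin (n+1)} (h : v s = v t) :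
    canon v s = canon v t := by
  have : (univ.filter fun u => v u = v s) = (univ.filter fun u => v u = v t) := by
    rw [h]
  simp only [canon, this]

lemma canon_iff (v : Fin (n+1) → α) (s t : Fin (n+1)) :
    canon v s = canon v t ↔ v s = v t := by
  constructor
  · intro h
    rw [← canon_apply v s, ← canon_apply v t, h]
  · exact canon_eq_of v

lemma canon_canon (v : Fin (n+1) → α) (s : Fin (n+1)) :
    canon v (canon v s) = canon v s := by
  exact canon_eq_of v (canon_apply v s)

/-- generic fiber-product transport to representatives -/
lemma prod_fiber_canon (v : Fin (n+1) → α) :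
    ∏ a : α, momeN ((univ.filter fun s => v s = a).card)
      = ∏ s ∈ univ.filter (fun s => canon v s = s),
          momeN ((univ.filter fun t => v t = v s).card) := by
  rw [← Finset.prod_subset (Finset.subset_univ (univ.image v))
    (fun a _ ha => by
      have : (univ.filter fun s => v s = a) = ∅ := by
        ext s; simp only [mem_filter, mem_univ, true_and, notMem_empty, iff_false]
        intro h; exact ha (mem_image.2 ⟨s, mem_univ s, h⟩)
      rw [this]; rfl)]
  have himg : univ.image v = (univ.filter (fun s => canon v s = s)).image v := by
    apply le_antisymm
    · intro a ha
      obtain ⟨s, -, rfl⟩ := mem_image.1 ha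
      refine mem_image.2 ⟨canon v s, ?_, canon_apply v s⟩
      simp [canon_canon]
    · exact Finset.image_subset_image (Finset.filter_subset _ _)
  rw [himg, Finset.prod_image (fun s hs t ht h => by
    rw [Finset.mem_coe, mem_filter] at hs ht
    rw [← hs.2, ← ht.2]
    exact canon_eq_of v h)]

def dN (a b : ℕ) : ℕ := if a = b then 1 else 0

def cntN (a b c d e f t : ℕ) : ℕ :=
  dN a t + dN b t + dN c t + dN d t + dN e t + dN f t

def lhs6 (a b c d e f : ℕ) : ℕ :=
  momeN (cntN a b c d e f 0) * momeN (cntN a b c d e f 1) * momeN (cntN a b c d e f 2)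
  * momeN (cntN a b c d e f 3) * momeN (cntN a b c d e f 4) * momeN (cntN a b c d e f 5)

def rhs6 (a b c d e f : ℕ) : ℕ :=
  dN a b * dN c d * dN e f + dN a b * dN c e * dN d f + dN a b * dN c f * dN d e
  + dN a c * dN b d * dN e f + dN a c * dN b e * dN d f + dN a c * dN b f * dN d e
  + dN a d * dN b c * dN e f + dN a d * dN b e * dN c f + dN a d * dN b f * dN c e
  + dN a e * dN b c * dN d f + dN a e * dN b d * dN c f + dN a e * dN b f * dN c d
  + dN a f * dN b c * dN d e + dN a f * dN b d * dN c e + dN a f * dN b e * dN c d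

set_option maxHeartbeats 4000000 in
lemma isserlis_list : ((List.range 1).all fun a => (List.range 2).all fun b =>
    (List.range 3).all fun c => (List.range 4).all fun d => (List.range 5).all fun e =>
    (List.range 6).all fun f => lhs6 a b c d e f == rhs6 a b c d e f) = true := by rfl

lemma isserlis6 {a b c d e f : ℕ} (ha : a < 1) (hb : b < 2) (hc : c < 3) (hd : d < 4)
    (he : e < 5) (hf : f < 6) : lhs6 a b c d e f = rhs6 a b c d e f := by
  have h := isserlis_list
  rw [List.all_eq_true] at h
  have h := h a (by simpa using ha); rw [List.all_eq_true] at h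
  have h := h b (by simpa using hb); rw [List.all_eq_true] at h
  have h := h c (by simpa using hc); rw [List.all_eq_true] at h
  have h := h d (by simpa using hd); rw [List.all_eq_true] at h
  have h := h e (by simpa using he); rw [List.all_eq_true] at h
  have h := h f (by simpa using hf)
  exact beq_iff_eq.mp h

lemma dN_val (x y : Fin 6) : dN x.val y.val = if x = y then 1 else 0 := by
  simp [dN, Fin.val_eq_val]

lemma prod_fin6_eq_lhs6 (u : Fin 6 → Fin 6) :
    ∏ b : Fin 6, momeN ((univ.filter fun s => u s = b).card)
      = lhs6 (u 0).val (u 1).val (u 2).val (u 3).val (u 4).val (u 5).val := by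
  have hcard : ∀ b : Fin 6, (univ.filter fun s => u s = b).card
      = cntN (u 0).val (u 1).val (u 2).val (u 3).val (u 4).val (u 5).val b.val := by
    intro b
    rw [Finset.card_filter, Fin.sum_univ_six]
    simp [cntN, dN_val]
  rw [Fin.prod_univ_six]
  simp only [hcard, lhs6]
  rfl

def dV {p : ℕ} (v : Fin 6 → Fin p) (s t : Fin 6) : ℕ := if v s = v t then 1 else 0

lemma Wkey {p : ℕ} (v : Fin 6 → Fin p) :
    ∏ a : Fin p, momeN ((univ.filter fun s => v s = a).card)
      = dV v 0 1 * dV v 2 3 * dV v 4 5 + dV v 0 1 * dV v 2 4 * dV v 3 5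
      + dV v 0 1 * dV v 2 5 * dV v 3 4
      + dV v 0 2 * dV v 1 3 * dV v 4 5 + dV v 0 2 * dV v 1 4 * dV v 3 5
      + dV v 0 2 * dV v 1 5 * dV v 3 4
      + dV v 0 3 * dV v 1 2 * dV v 4 5 + dV v 0 3 * dV v 1 4 * dV v 2 5
      + dV v 0 3 * dV v 1 5 * dV v 2 4
      + dV v 0 4 * dV v 1 2 * dV v 3 5 + dV v 0 4 * dV v 1 3 * dV v 2 5
      + dV v 0 4 * dV v 1 5 * dV v 2 3
      + dV v 0 5 * dV v 1 2 * dV v 3 4 + dV v 0 5 * dV v 1 3 * dV v 2 4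
      + dV v 0 5 * dV v 1 4 * dV v 2 3 := by
  set w := canon v with hw
  have hset : ∀ s, (univ.filter fun t => w t = w s) = (univ.filter fun t => v t = v s) := by
    intro s; ext t; simp [hw, canon_iff]
  have hcanonw : ∀ s, canon w s = w s := by
    intro s
    have h1 : canon w s = canon v s := by
      simp only [canon, hset]
    exact h1
  have step1 := prod_fiber_canon v
  have step2 := prod_fiber_canon w
  have hR : (univ.filter fun s => canon w s = s) = (univ.filter fun s => canon v s = s) := by
    ext s; rw [mem_filter, mem_filter, hcanonw, hw]
  have hsummand : ∀ s, momeN ((univ.filter fun t => w t = w s).card)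
      = momeN ((univ.filter fun t => v t = v s).card) := by
    intro s; rw [hset]
  have key : ∏ a : Fin p, momeN ((univ.filter fun s => v s = a).card)
      = ∏ b : Fin 6, momeN ((univ.filter fun s => w s = b).card) := by
    rw [step1, step2, hR]
    exact Finset.prod_congr rfl fun s _ => (hsummand s).symm
  rw [key, prod_fin6_eq_lhs6]
  have hle : ∀ s : Fin 6, (w s).val ≤ s.val := fun s => canon_le v s
  have h6 := isserlis6 (Nat.lt_succ_of_le (hle 0)) (Nat.lt_succ_of_le (hle 1))
    (Nat.lt_succ_of_le (hle 2)) (Nat.lt_succ_of_le (hle 3))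
    (Nat.lt_succ_of_le (hle 4)) (Nat.lt_succ_of_le (hle 5))
  rw [h6, rhs6]
  have hdd : ∀ s t : Fin 6, dN (w s).val (w t).val = dV v s t := by
    intro s t
    rw [dN_val]
    simp [dV, hw, canon_iff]
  simp only [hdd]

noncomputable def chiR {p : ℕ} (a b : Fin p) : ℝ := if a = b then 1 else 0

section comb15
variable {p : ℕ} (T : Fin p → Fin p → Fin p → ℝ)

lemma Bform : (∑ x, (∑ j, T x j j) ^ 2) = ∑ x, ∑ a, ∑ b, T x a a * T x b b := by
  refine Finset.sum_congr rfl fun x _ => ?_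
  rw [sq, Finset.sum_mul_sum]

lemma Aform : (∑ i, ∑ j, ∑ k, (T i j k) ^ 2) = ∑ i, ∑ j, ∑ k, T i j k * T i j k := by
  simp only [sq]

variable (hsym : ∀ i j k, T i j k = T j i k ∧ T i j k = T i k j)
include hsym

lemma hs1 : ∀ a b c, T a b c = T b a c := fun a b c => (hsym a b c).1
lemma hs2 : ∀ a b c, T a b c = T a c b := fun a b c => (hsym a b c).2
lemma h_aab : ∀ a b, T a a b = T b a a := fun a b => by
  rw [hs2 T hsym a a b, hs1 T hsym a b a]
lemma h_aba : ∀ a b, T a b a = T b a a := fun a b => hs1 T hsym a b a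

section
set_option maxHeartbeats 1000000

lemma e1 : (∑ i, ∑ j, ∑ k, ∑ l, ∑ m, ∑ n,
    T i j k * T l m n * (chiR i j * chiR k l * chiR m n))
    = ∑ x, (∑ j, T x j j) ^ 2 := by
  simp only [chiR, mul_ite, ite_mul, mul_one, one_mul, mul_zero, zero_mul,
    Finset.sum_ite_eq, Finset.sum_ite_eq', Finset.mem_univ, if_true,
    Finset.sum_ite_irrel, Finset.sum_const_zero]
  rw [Bform, Finset.sum_comm]
  exact Finset.sum_congr rfl fun k _ => Finset.sum_congr rfl fun i _ =>
    Finset.sum_congr rfl fun m _ => by rw [h_aab T hsym i k]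

lemma e2 : (∑ i, ∑ j, ∑ k, ∑ l, ∑ m, ∑ n,
    T i j k * T l m n * (chiR i j * chiR k m * chiR l n))
    = ∑ x, (∑ j, T x j j) ^ 2 := by
  simp only [chiR, mul_ite, ite_mul, mul_one, one_mul, mul_zero, zero_mul,
    Finset.sum_ite_eq, Finset.sum_ite_eq', Finset.mem_univ, if_true,
    Finset.sum_ite_irrel, Finset.sum_const_zero]
  rw [Bform, Finset.sum_comm]
  exact Finset.sum_congr rfl fun k _ => Finset.sum_congr rfl fun i _ =>
    Finset.sum_congr rfl fun l _ => by rw [h_aab T hsym i k, h_aba T hsym l k]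

lemma e3 : (∑ i, ∑ j, ∑ k, ∑ l, ∑ m, ∑ n,
    T i j k * T l m n * (chiR i j * chiR k n * chiR l m))
    = ∑ x, (∑ j, T x j j) ^ 2 := by
  simp only [chiR, mul_ite, ite_mul, mul_one, one_mul, mul_zero, zero_mul,
    Finset.sum_ite_eq, Finset.sum_ite_eq', Finset.mem_univ, if_true,
    Finset.sum_ite_irrel, Finset.sum_const_zero]
  rw [Bform, Finset.sum_comm]
  exact Finset.sum_congr rfl fun k _ => Finset.sum_congr rfl fun i _ =>
    Finset.sum_congr rfl fun l _ => by rw [h_aab T hsym i k, h_aab T hsym l k]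

lemma e4 : (∑ i, ∑ j, ∑ k, ∑ l, ∑ m, ∑ n,
    T i j k * T l m n * (chiR i k * chiR j l * chiR m n))
    = ∑ x, (∑ j, T x j j) ^ 2 := by
  simp only [chiR, mul_ite, ite_mul, mul_one, one_mul, mul_zero, zero_mul,
    Finset.sum_ite_eq, Finset.sum_ite_eq', Finset.mem_univ, if_true,
    Finset.sum_ite_irrel, Finset.sum_const_zero]
  rw [Bform, Finset.sum_comm]
  exact Finset.sum_congr rfl fun j _ => Finset.sum_congr rfl fun i _ =>
    Finset.sum_congr rfl fun m _ => by rw [h_aba T hsym i j]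

lemma e5 : (∑ i, ∑ j, ∑ k, ∑ l, ∑ m, ∑ n,
    T i j k * T l m n * (chiR i k * chiR j m * chiR l n))
    = ∑ x, (∑ j, T x j j) ^ 2 := by
  simp only [chiR, mul_ite, ite_mul, mul_one, one_mul, mul_zero, zero_mul,
    Finset.sum_ite_eq, Finset.sum_ite_eq', Finset.mem_univ, if_true,
    Finset.sum_ite_irrel, Finset.sum_const_zero]
  rw [Bform, Finset.sum_comm]
  exact Finset.sum_congr rfl fun j _ => Finset.sum_congr rfl fun i _ =>
    Finset.sum_congr rfl fun l _ => by rw [h_aba T hsym i j, h_aba T hsym l j]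

lemma e6 : (∑ i, ∑ j, ∑ k, ∑ l, ∑ m, ∑ n,
    T i j k * T l m n * (chiR i k * chiR j n * chiR l m))
    = ∑ x, (∑ j, T x j j) ^ 2 := by
  simp only [chiR, mul_ite, ite_mul, mul_one, one_mul, mul_zero, zero_mul,
    Finset.sum_ite_eq, Finset.sum_ite_eq', Finset.mem_univ, if_true,
    Finset.sum_ite_irrel, Finset.sum_const_zero]
  rw [Bform, Finset.sum_comm]
  exact Finset.sum_congr rfl fun j _ => Finset.sum_congr rfl fun i _ =>
    Finset.sum_congr rfl fun l _ => by rw [h_aba T hsym i j, h_aab T hsym l j]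

lemma e7 : (∑ i, ∑ j, ∑ k, ∑ l, ∑ m, ∑ n,
    T i j k * T l m n * (chiR i l * chiR j k * chiR m n))
    = ∑ x, (∑ j, T x j j) ^ 2 := by
  simp only [chiR, mul_ite, ite_mul, mul_one, one_mul, mul_zero, zero_mul,
    Finset.sum_ite_eq, Finset.sum_ite_eq', Finset.mem_univ, if_true,
    Finset.sum_ite_irrel, Finset.sum_const_zero]
  rw [Bform]

lemma e10 : (∑ i, ∑ j, ∑ k, ∑ l, ∑ m, ∑ n,
    T i j k * T l m n * (chiR i m * chiR j k * chiR l n))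
    = ∑ x, (∑ j, T x j j) ^ 2 := by
  simp only [chiR, mul_ite, ite_mul, mul_one, one_mul, mul_zero, zero_mul,
    Finset.sum_ite_eq, Finset.sum_ite_eq', Finset.mem_univ, if_true,
    Finset.sum_ite_irrel, Finset.sum_const_zero]
  rw [Bform]
  exact Finset.sum_congr rfl fun i _ => Finset.sum_congr rfl fun j _ =>
    Finset.sum_congr rfl fun l _ => by rw [h_aba T hsym l i]

lemma e13 : (∑ i, ∑ j, ∑ k, ∑ l, ∑ m, ∑ n,
    T i j k * T l m n * (chiR i n * chiR j k * chiR l m))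
    = ∑ x, (∑ j, T x j j) ^ 2 := by
  simp only [chiR, mul_ite, ite_mul, mul_one, one_mul, mul_zero, zero_mul,
    Finset.sum_ite_eq, Finset.sum_ite_eq', Finset.mem_univ, if_true,
    Finset.sum_ite_irrel, Finset.sum_const_zero]
  rw [Bform]
  exact Finset.sum_congr rfl fun i _ => Finset.sum_congr rfl fun j _ =>
    Finset.sum_congr rfl fun l _ => by rw [h_aab T hsym l i]

lemma e8 : (∑ i, ∑ j, ∑ k, ∑ l, ∑ m, ∑ n,
    T i j k * T l m n * (chiR i l * chiR j m * chiR k n))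
    = ∑ i, ∑ j, ∑ k, (T i j k) ^ 2 := by
  simp only [chiR, mul_ite, ite_mul, mul_one, one_mul, mul_zero, zero_mul,
    Finset.sum_ite_eq, Finset.sum_ite_eq', Finset.mem_univ, if_true,
    Finset.sum_ite_irrel, Finset.sum_const_zero]
  rw [Aform]

lemma e9 : (∑ i, ∑ j, ∑ k, ∑ l, ∑ m, ∑ n,
    T i j k * T l m n * (chiR i l * chiR j n * chiR k m))
    = ∑ i, ∑ j, ∑ k, (T i j k) ^ 2 := by
  simp only [chiR, mul_ite, ite_mul, mul_one, one_mul, mul_zero, zero_mul,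
    Finset.sum_ite_eq, Finset.sum_ite_eq', Finset.mem_univ, if_true,
    Finset.sum_ite_irrel, Finset.sum_const_zero]
  rw [Aform]
  exact Finset.sum_congr rfl fun i _ => Finset.sum_congr rfl fun j _ =>
    Finset.sum_congr rfl fun k _ => by rw [hs2 T hsym i k j]

lemma e11 : (∑ i, ∑ j, ∑ k, ∑ l, ∑ m, ∑ n,
    T i j k * T l m n * (chiR i m * chiR j l * chiR k n))
    = ∑ i, ∑ j, ∑ k, (T i j k) ^ 2 := by
  simp only [chiR, mul_ite, ite_mul, mul_one, one_mul, mul_zero, zero_mul,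
    Finset.sum_ite_eq, Finset.sum_ite_eq', Finset.mem_univ, if_true,
    Finset.sum_ite_irrel, Finset.sum_const_zero]
  rw [Aform]
  exact Finset.sum_congr rfl fun i _ => Finset.sum_congr rfl fun j _ =>
    Finset.sum_congr rfl fun k _ => by rw [hs1 T hsym j i k]

lemma e12 : (∑ i, ∑ j, ∑ k, ∑ l, ∑ m, ∑ n,
    T i j k * T l m n * (chiR i m * chiR j n * chiR k l))
    = ∑ i, ∑ j, ∑ k, (T i j k) ^ 2 := by
  simp only [chiR, mul_ite, ite_mul, mul_one, one_mul, mul_zero, zero_mul,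
    Finset.sum_ite_eq, Finset.sum_ite_eq', Finset.mem_univ, if_true,
    Finset.sum_ite_irrel, Finset.sum_const_zero]
  rw [Aform]
  exact Finset.sum_congr rfl fun i _ => Finset.sum_congr rfl fun j _ =>
    Finset.sum_congr rfl fun k _ => by rw [hs1 T hsym k i j, hs2 T hsym i k j]

lemma e14 : (∑ i, ∑ j, ∑ k, ∑ l, ∑ m, ∑ n,
    T i j k * T l m n * (chiR i n * chiR j l * chiR k m))
    = ∑ i, ∑ j, ∑ k, (T i j k) ^ 2 := by
  simp only [chiR, mul_ite, ite_mul, mul_one, one_mul, mul_zero, zero_mul,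
    Finset.sum_ite_eq, Finset.sum_ite_eq', Finset.mem_univ, if_true,
    Finset.sum_ite_irrel, Finset.sum_const_zero]
  rw [Aform]
  exact Finset.sum_congr rfl fun i _ => Finset.sum_congr rfl fun j _ =>
    Finset.sum_congr rfl fun k _ => by rw [hs2 T hsym j k i, hs1 T hsym j i k]

lemma e15 : (∑ i, ∑ j, ∑ k, ∑ l, ∑ m, ∑ n,
    T i j k * T l m n * (chiR i n * chiR j m * chiR k l))
    = ∑ i, ∑ j, ∑ k, (T i j k) ^ 2 := by
  simp only [chiR, mul_ite, ite_mul, mul_one, one_mul, mul_zero, zero_mul,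
    Finset.sum_ite_eq, Finset.sum_ite_eq', Finset.mem_univ, if_true,
    Finset.sum_ite_irrel, Finset.sum_const_zero]
  rw [Aform]
  exact Finset.sum_congr rfl fun i _ => Finset.sum_congr rfl fun j _ =>
    Finset.sum_congr rfl fun k _ => by rw [hs2 T hsym k j i, hs1 T hsym k i j, hs2 T hsym i k j]

set_option maxHeartbeats 3000000 in
lemma sum15 :
    (∑ i, ∑ j, ∑ k, ∑ l, ∑ m, ∑ n, T i j k * T l m n *
      (chiR i j * chiR k l * chiR m n + chiR i j * chiR k m * chiR l n
      + chiR i j * chiR k n * chiR l m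
      + chiR i k * chiR j l * chiR m n + chiR i k * chiR j m * chiR l n
      + chiR i k * chiR j n * chiR l m
      + chiR i l * chiR j k * chiR m n + chiR i l * chiR j m * chiR k n
      + chiR i l * chiR j n * chiR k m
      + chiR i m * chiR j k * chiR l n + chiR i m * chiR j l * chiR k n
      + chiR i m * chiR j n * chiR k l
      + chiR i n * chiR j k * chiR l m + chiR i n * chiR j l * chiR k m
      + chiR i n * chiR j m * chiR k l))
    = 6 * (∑ i, ∑ j, ∑ k, (T i j k) ^ 2) + 9 * ∑ x, (∑ j, T x j j) ^ 2 := by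
  simp (config := { maxSteps := 10000000 }) only [mul_add, Finset.sum_add_distrib]
  rw [e1 T hsym, e2 T hsym, e3 T hsym, e4 T hsym, e5 T hsym, e6 T hsym, e7 T hsym,
    e8 T hsym, e9 T hsym, e10 T hsym, e11 T hsym, e12 T hsym, e13 T hsym,
    e14 T hsym, e15 T hsym]
  ring

end
end comb15


section glue
open Finset

lemma prod_comp_pow {p : ℕ} (γ : Fin p → ℝ) (v : Fin 6 → Fin p) :
    ∏ s : Fin 6, γ (v s) = ∏ a : Fin p, γ a ^ ((univ.filter fun s => v s = a).card) := by
  rw [Finset.prod_comp]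
  refine Finset.prod_subset (subset_univ _) fun a _ ha => ?_
  have : (univ.filter fun s => v s = a) = ∅ := by
    ext s; simp only [mem_filter, mem_univ, true_and, notMem_empty, iff_false]
    exact fun h => ha (mem_image.2 ⟨s, mem_univ s, h⟩)
  rw [this]
  simp

lemma integral_sum6 {X : Type*} [MeasurableSpace X] (μ : Measure X) {q : ℕ}
    (F : Fin q → Fin q → Fin q → Fin q → Fin q → Fin q → X → ℝ)
    (hF : ∀ i j k l m n, Integrable (F i j k l m n) μ) :
    ∫ γ, ∑ i, ∑ j, ∑ k, ∑ l, ∑ m, ∑ n, F i j k l m n γ ∂μ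
      = ∑ i, ∑ j, ∑ k, ∑ l, ∑ m, ∑ n, ∫ γ, F i j k l m n γ ∂μ := by
  have h5 : ∀ i j k l m, Integrable (fun γ => ∑ n, F i j k l m n γ) μ :=
    fun i j k l m => integrable_finset_sum _ fun n _ => hF i j k l m n
  have h4 : ∀ i j k l, Integrable (fun γ => ∑ m, ∑ n, F i j k l m n γ) μ :=
    fun i j k l => integrable_finset_sum _ fun m _ => h5 i j k l m
  have h3 : ∀ i j k, Integrable (fun γ => ∑ l, ∑ m, ∑ n, F i j k l m n γ) μ :=
    fun i j k => integrable_finset_sum _ fun l _ => h4 i j k l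
  have h2 : ∀ i j, Integrable (fun γ => ∑ k, ∑ l, ∑ m, ∑ n, F i j k l m n γ) μ :=
    fun i j => integrable_finset_sum _ fun k _ => h3 i j k
  have h1 : ∀ i, Integrable (fun γ => ∑ j, ∑ k, ∑ l, ∑ m, ∑ n, F i j k l m n γ) μ :=
    fun i => integrable_finset_sum _ fun j _ => h2 i j
  rw [integral_finset_sum _ fun i _ => h1 i]
  refine sum_congr rfl fun i _ => ?_
  rw [integral_finset_sum _ fun j _ => h2 i j]
  refine sum_congr rfl fun j _ => ?_
  rw [integral_finset_sum _ fun k _ => h3 i j k]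
  refine sum_congr rfl fun k _ => ?_
  rw [integral_finset_sum _ fun l _ => h4 i j k l]
  refine sum_congr rfl fun l _ => ?_
  rw [integral_finset_sum _ fun m _ => h5 i j k l m]
  refine sum_congr rfl fun m _ => ?_
  rw [integral_finset_sum _ fun n _ => hF i j k l m n]

end glue


/-- For every symmetric 3-tensor `T` on `ℝ^p`,
`E[T(γ)²] = 6‖T‖_Fr² + 9‖M‖²` where `γ` is a standard Gaussian vector,
`M i = tr(T_i) = ∑ j, T i j j` and `‖T‖_Fr² = ∑ i j k, (T i j k)²`. -/
theorem gaussian_tensor_second_moment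
    (p : ℕ) (T : Fin p → Fin p → Fin p → ℝ)
    (hsym : ∀ i j k, T i j k = T j i k ∧ T i j k = T i k j) :
    ∫ γ : Fin p → ℝ,
        (∑ i, ∑ j, ∑ k, T i j k * γ i * γ j * γ k) ^ 2
        ∂(Measure.pi fun _ : Fin p => gaussianReal 0 1)
      = 6 * (∑ i, ∑ j, ∑ k, (T i j k) ^ 2) + 9 * ∑ i, (∑ j, T i j j) ^ 2 := by
  classical
  set μ : Measure (Fin p → ℝ) := Measure.pi fun _ : Fin p => gaussianReal 0 1 with hμ
  set cnt : Fin p → Fin p → Fin p → Fin p → Fin p → Fin p → Fin p → ℕ :=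
    fun i j k l m n a => ((univ.filter fun s => (![i,j,k,l,m,n] : Fin 6 → Fin p) s = a).card)
    with hcnt
  have hcntle : ∀ i j k l m n a, cnt i j k l m n a ≤ 6 := by
    intro i j k l m n a
    refine (Finset.card_filter_le _ _).trans ?_
    simp
  -- pointwise expansion
  have hterm : ∀ (γ : Fin p → ℝ) (i j k l m n : Fin p),
      (T i j k * γ i * γ j * γ k) * (T l m n * γ l * γ m * γ n)
        = (T i j k * T l m n) * ∏ a, γ a ^ (cnt i j k l m n a) := by
    intro γ i j k l m n
    rw [hcnt, ← prod_comp_pow γ (![i,j,k,l,m,n])]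
    rw [Fin.prod_univ_six]
    have h0 : (![i,j,k,l,m,n] : Fin 6 → Fin p) 0 = i := rfl
    have h1 : (![i,j,k,l,m,n] : Fin 6 → Fin p) 1 = j := rfl
    have h2 : (![i,j,k,l,m,n] : Fin 6 → Fin p) 2 = k := rfl
    have h3 : (![i,j,k,l,m,n] : Fin 6 → Fin p) 3 = l := rfl
    have h4 : (![i,j,k,l,m,n] : Fin 6 → Fin p) 4 = m := rfl
    have h5 : (![i,j,k,l,m,n] : Fin 6 → Fin p) 5 = n := rfl
    rw [h0, h1, h2, h3, h4, h5]
    ring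
  have hpoint : ∀ γ : Fin p → ℝ,
      (∑ i, ∑ j, ∑ k, T i j k * γ i * γ j * γ k) ^ 2
        = ∑ i, ∑ j, ∑ k, ∑ l, ∑ m, ∑ n,
            (T i j k * T l m n) * ∏ a, γ a ^ (cnt i j k l m n a) := by
    intro γ
    rw [sq]
    simp only [Finset.sum_mul, Finset.mul_sum]
    refine sum_congr rfl fun i _ => sum_congr rfl fun j _ => sum_congr rfl fun k _ =>
      sum_congr rfl fun l _ => sum_congr rfl fun m _ => sum_congr rfl fun n _ => ?_
    rw [mul_comm]
    exact hterm γ i j k l m n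
  have hintegr : ∀ i j k l m n : Fin p,
      Integrable (fun γ : Fin p → ℝ => (T i j k * T l m n) * ∏ a, γ a ^ (cnt i j k l m n a)) μ := by
    intro i j k l m n
    letI : MeasureSpace ℝ := ⟨gaussianReal 0 1⟩
    haveI : SigmaFinite (volume : Measure ℝ) :=
      inferInstanceAs (SigmaFinite (gaussianReal 0 1))
    have : Integrable (fun γ : Fin p → ℝ => ∏ a, γ a ^ (cnt i j k l m n a))
        (volume : Measure (Fin p → ℝ)) :=
      Integrable.fintype_prod (f := fun a (t : ℝ) => t ^ (cnt i j k l m n a))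
        (fun a => integrable_pow_gaussianReal _)
    exact this.const_mul _
  have hval : ∀ i j k l m n : Fin p,
      ∫ γ, (T i j k * T l m n) * ∏ a, γ a ^ (cnt i j k l m n a) ∂μ
        = (T i j k * T l m n) * ∏ a : Fin p, (momeN (cnt i j k l m n a) : ℝ) := by
    intro i j k l m n
    rw [integral_const_mul]
    congr 1
    letI : MeasureSpace ℝ := ⟨gaussianReal 0 1⟩
    haveI : SigmaFinite (volume : Measure ℝ) :=
      inferInstanceAs (SigmaFinite (gaussianReal 0 1))
    have h := MeasureTheory.integral_fintype_prod_eq_prod (𝕜 := ℝ) (μ := fun _ : Fin p => gaussianReal 0 1)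
      (f := fun a (t : ℝ) => t ^ (cnt i j k l m n a))
    refine h.trans ?_
    exact prod_congr rfl fun a _ => integral_pow_gaussianReal (hcntle i j k l m n a)
  -- main computation
  calc ∫ γ : Fin p → ℝ, (∑ i, ∑ j, ∑ k, T i j k * γ i * γ j * γ k) ^ 2 ∂μ
      = ∫ γ, ∑ i, ∑ j, ∑ k, ∑ l, ∑ m, ∑ n,
          (T i j k * T l m n) * ∏ a, γ a ^ (cnt i j k l m n a) ∂μ := by
        exact integral_congr_ae (Filter.Eventually.of_forall hpoint)
    _ = ∑ i, ∑ j, ∑ k, ∑ l, ∑ m, ∑ n, ∫ γ, (T i j k * T l m n)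
          * ∏ a, γ a ^ (cnt i j k l m n a) ∂μ :=
        integral_sum6 μ _ hintegr
    _ = ∑ i, ∑ j, ∑ k, ∑ l, ∑ m, ∑ n, (T i j k * T l m n)
          * (chiR i j * chiR k l * chiR m n + chiR i j * chiR k m * chiR l n
            + chiR i j * chiR k n * chiR l m
            + chiR i k * chiR j l * chiR m n + chiR i k * chiR j m * chiR l n
            + chiR i k * chiR j n * chiR l m
            + chiR i l * chiR j k * chiR m n + chiR i l * chiR j m * chiR k n
            + chiR i l * chiR j n * chiR k m
            + chiR i m * chiR j k * chiR l n + chiR i m * chiR j l * chiR k n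
            + chiR i m * chiR j n * chiR k l
            + chiR i n * chiR j k * chiR l m + chiR i n * chiR j l * chiR k m
            + chiR i n * chiR j m * chiR k l) := by
        refine sum_congr rfl fun i _ => sum_congr rfl fun j _ => sum_congr rfl fun k _ =>
          sum_congr rfl fun l _ => sum_congr rfl fun m _ => sum_congr rfl fun n _ => ?_
        rw [hval i j k l m n]
        congr 1
        have hv := Wkey (![i,j,k,l,m,n] : Fin 6 → Fin p)
        have hcast : ∏ a : Fin p, (momeN (cnt i j k l m n a) : ℝ)
            = ((∏ a : Fin p, momeN (cnt i j k l m n a) : ℕ) : ℝ) := by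
          push_cast
          rfl
        rw [hcast, hcnt]
        rw [hv]
        have hdd : ∀ s t : Fin 6, ((dV (![i,j,k,l,m,n] : Fin 6 → Fin p) s t : ℕ) : ℝ)
            = chiR ((![i,j,k,l,m,n] : Fin 6 → Fin p) s) ((![i,j,k,l,m,n] : Fin 6 → Fin p) t) := by
          intro s t
          simp [dV, chiR, apply_ite (fun x : ℕ => (x : ℝ))]
        push_cast [hdd]
        rfl
    _ = 6 * (∑ i, ∑ j, ∑ k, (T i j k) ^ 2) + 9 * ∑ i, (∑ j, T i j j) ^ 2 := by
        exact sum15 T hsym
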